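/- Let D be a GCD domain and let A ∈ D^{n×n}. Fix k with 1 ≤ k ≤ n. Then a greatest common divisor of all k×k minors of the n×2n block matrix (AᵗA | Aᵗ) is an associate of (equal up to a unit of D to) the k-th determinantal divisor d_k* of A, i.e. a greatest common divisor of all k×k minors of A. -/

import Mathlib

open Matrix

/-- Cauchy–Binet style expansion: determinant of a product of a `k × m` and an
`m × k` matrix as a sum over all selection functions `p : Fin k → Fin m` of
products of entries of `M` with minors of `N` (rows selected by `p`). -/
lemma det_mul_expand {R : Type*} [CommRing R] {k m : ℕ}
    (M : Matrix (Fin k) (Fin m) R) (N : Matrix (Fin m) (Fin k) R) :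
    (M * N).det = ∑ p : Fin k → Fin m, (∏ i, M i (p i)) * (N.submatrix p id).det := by
  have h : (M * N).det =
      (Matrix.detRowAlternating.toMultilinearMap :
        MultilinearMap R (fun _ : Fin k => Fin k → R) R)
        (fun i : Fin k => ∑ l : Fin m, M i l • (N l : Fin k → R)) := by
    show (M * N).det = Matrix.detRowAlternating fun i : Fin k => ∑ l : Fin m, M i l • (N l : Fin k → R)
    congr 1 with i j
    simp [Matrix.mul_apply]
  rw [h, MultilinearMap.map_sum]
  refine Finset.sum_congr rfl fun p _ => ?_
  rw [MultilinearMap.map_smul_univ]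
  rfl

/-- Column version: expansion with minors of `M` (columns selected by `p`). -/
lemma det_mul_expand_col {R : Type*} [CommRing R] {k m : ℕ}
    (M : Matrix (Fin k) (Fin m) R) (N : Matrix (Fin m) (Fin k) R) :
    (M * N).det = ∑ p : Fin k → Fin m, (∏ j, N (p j) j) * (M.submatrix id p).det := by
  rw [← Matrix.det_transpose, Matrix.transpose_mul, det_mul_expand]
  refine Finset.sum_congr rfl fun p _ => ?_
  rw [← Matrix.det_transpose (M.submatrix id p)]
  congr 1

/-- Let `D` be a GCD domain and `A ∈ D^{n×n}`.  A gcd `e` of all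
`k × k` minors of the `n × 2n` block matrix `(Aᵀ·A | Aᵀ)` is an associate of the
`k`-th determinantal divisor `d` of `A`, i.e. of a gcd of all `k × k` minors of `A`.
(Index sets of size `k` are encoded by injective maps from `Fin k`.) -/
theorem stmt14 {D : Type*} [CommRing D] [IsDomain D] [GCDMonoid D] {n : ℕ}
    (A : Matrix (Fin n) (Fin n) D) (k : ℕ) (hk1 : 1 ≤ k) (hkn : k ≤ n) (d e : D)
    (hd1 : ∀ I J : Fin k → Fin n, Function.Injective I → Function.Injective J →
      d ∣ (A.submatrix I J).det)
    (hd2 : ∀ c : D, (∀ I J : Fin k → Fin n, Function.Injective I →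
      Function.Injective J → c ∣ (A.submatrix I J).det) → c ∣ d)
    (he1 : ∀ (I : Fin k → Fin n) (J : Fin k → Fin n ⊕ Fin n), Function.Injective I →
      Function.Injective J → e ∣ ((Matrix.fromCols (Aᵀ * A) Aᵀ).submatrix I J).det)
    (he2 : ∀ c : D, (∀ (I : Fin k → Fin n) (J : Fin k → Fin n ⊕ Fin n),
      Function.Injective I → Function.Injective J →
      c ∣ ((Matrix.fromCols (Aᵀ * A) Aᵀ).submatrix I J).det) → c ∣ e) :
    Associated d e := by
  apply associated_of_dvd_dvd
  · -- d ∣ e : d divides every minor of the block matrix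
    apply he2
    intro I J hI hJ
    have hB : Matrix.fromCols (Aᵀ * A) Aᵀ = Aᵀ * Matrix.fromCols A 1 := by
      rw [Matrix.mul_fromCols, Matrix.mul_one]
    have hsub : (Matrix.fromCols (Aᵀ * A) Aᵀ).submatrix I J =
        (Aᵀ.submatrix I id) * ((Matrix.fromCols A 1).submatrix id J) := by
      rw [hB, ← Matrix.submatrix_mul_equiv Aᵀ (Matrix.fromCols A 1) I (Equiv.refl _) J]
      rfl
    rw [hsub, det_mul_expand_col]
    refine Finset.dvd_sum fun p _ => Dvd.dvd.mul_left ?_ _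
    by_cases hp : Function.Injective p
    · have : ((Aᵀ.submatrix I id).submatrix id p).det = (A.submatrix p I).det := by
        rw [← Matrix.det_transpose (A.submatrix p I)]
        congr 1
      rw [this]
      exact hd1 p I hp hI
    · -- repeated columns give zero determinant
      rw [Function.not_injective_iff] at hp
      obtain ⟨i, j, hpij, hij⟩ := hp
      have hz : ((Aᵀ.submatrix I id).submatrix id p).det = 0 := by
        apply Matrix.det_zero_of_column_eq hij
        intro l
        simp [hpij]
      rw [hz]
      exact dvd_zero d
  · -- e ∣ d : every minor of A is (up to transpose) a minor of the block matrix
    apply hd2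
    intro I J hI hJ
    have := he1 J (Sum.inr ∘ I) hJ (Sum.inr_injective.comp hI)
    have hEq : ((Matrix.fromCols (Aᵀ * A) Aᵀ).submatrix J (Sum.inr ∘ I)).det =
        (A.submatrix I J).det := by
      rw [← Matrix.det_transpose (A.submatrix I J)]
      congr 1
    rwa [hEq] at this
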